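/- The free vector space with basis {A_m : m ∈ ℤ} ∪ {G_l : l ∈ ℕ⁺}, equipped with the antisymmetric bilinear bracket defined by [A_l, A_m] = 2 G_{l−m} for l > m, [G_l, A_m] = A_{m+l} − A_{m−l}, and [G_l, G_m] = 0 (extending with G_{−m} = −G_m and G_0 = 0), satisfies the Jacobi identity and hence is a Lie algebra (the Onsager algebra). -/

import Mathlib

set_option linter.unusedSectionVars false


/-- Index type for the basis of the Onsager algebra: `Sum.inl m ↦ A_m` (`m ∈ ℤ`) and
`Sum.inr l ↦ G_l` (`l ∈ ℕ₊`, i.e. positive integers). -/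
abbrev OnsIdx : Type := ℤ ⊕ {l : ℤ // 0 < l}

variable (k : Type) [Field k] [CharZero k]

/-- The basis vector `A_m` in the free vector space on `OnsIdx`. -/
noncomputable def Aelt (m : ℤ) : OnsIdx →₀ k := Finsupp.single (Sum.inl m) 1

/-- The element `G_n` for arbitrary `n ∈ ℤ`, with the conventions `G_0 = 0` and
`G_{-n} = -G_n`. -/
noncomputable def Gelt (n : ℤ) : OnsIdx →₀ k :=
  if h : 0 < n then Finsupp.single (Sum.inr ⟨n, h⟩) 1
  else if h' : 0 < -n then -Finsupp.single (Sum.inr ⟨-n, h'⟩) 1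
  else 0

/-- The bracket on basis elements: `[A_l, A_m] = 2 G_{l-m}`, `[G_l, A_m] = A_{m+l} - A_{m-l}`,
`[A_m, G_l] = -(A_{m+l} - A_{m-l})` and `[G_l, G_m] = 0`. -/
noncomputable def brB : OnsIdx → OnsIdx → (OnsIdx →₀ k)
  | Sum.inl l, Sum.inl m => (2 : k) • Gelt k (l - m)
  | Sum.inr l, Sum.inl m => Aelt k (m + l.1) - Aelt k (m - l.1)
  | Sum.inl m, Sum.inr l => -(Aelt k (m + l.1) - Aelt k (m - l.1))
  | Sum.inr _, Sum.inr _ => 0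

/-- The bilinear extension of the bracket to the whole free vector space. -/
noncomputable def onsBracket (x y : OnsIdx →₀ k) : OnsIdx →₀ k :=
  x.sum fun i a => y.sum fun j b => (a * b) • brB k i j

/-- The antisymmetric bilinear bracket defined by Onsager's relations on the free vector
space with basis `{A_m : m ∈ ℤ} ∪ {G_l : l ∈ ℕ₊}` is alternating and satisfies the Jacobi
identity; hence the Onsager algebra is a Lie algebra. -/
noncomputable def BrL : (OnsIdx →₀ k) →ₗ[k] (OnsIdx →₀ k) →ₗ[k] (OnsIdx →₀ k) :=
  Finsupp.lsum k fun i => LinearMap.toSpanSingleton k _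
    (Finsupp.lsum k fun j => LinearMap.toSpanSingleton k _ (brB k i j))

lemma onsBracket_eq (x y : OnsIdx →₀ k) : onsBracket k x y = BrL k x y := by
  simp only [onsBracket, BrL, Finsupp.lsum_apply, Finsupp.sum_apply,
    LinearMap.finsupp_sum_apply, LinearMap.smul_apply, LinearMap.toSpanSingleton_apply, Finsupp.smul_sum, smul_smul]

lemma BrL_single_single (i j : OnsIdx) : BrL k (Finsupp.single i 1) (Finsupp.single j 1) = brB k i j := by
  simp [BrL]

lemma Gelt_neg (n : ℤ) : Gelt k (-n) = - Gelt k n := by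
  unfold Gelt
  rcases lt_trichotomy 0 n with h | h | h
  · rw [dif_neg (by omega), dif_pos (by omega : (0:ℤ) < - -n), dif_pos h]
    simp
  · simp [← h]
  · rw [dif_pos (by omega), dif_neg (by omega), dif_pos (by omega : (0:ℤ) < -n)]
    simp

lemma Gelt_zero : Gelt k 0 = 0 := by simp [Gelt]

lemma Gelt_pos {n : ℤ} (h : 0 < n) : Gelt k n = Finsupp.single (Sum.inr ⟨n, h⟩) 1 := by
  simp [Gelt, h]

lemma brL_AA (l m : ℤ) : BrL k (Aelt k l) (Aelt k m) = (2 : k) • Gelt k (l - m) := by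
  have := BrL_single_single k (Sum.inl l) (Sum.inl m)
  simp only [brB] at this
  exact this

lemma brL_GA_pos {n : ℤ} (h : 0 < n) (m : ℤ) :
    BrL k (Gelt k n) (Aelt k m) = Aelt k (m + n) - Aelt k (m - n) := by
  rw [Gelt_pos k h]
  have := BrL_single_single k (Sum.inr ⟨n, h⟩) (Sum.inl m)
  simp only [brB] at this
  exact this

lemma brL_AG_pos {n : ℤ} (h : 0 < n) (m : ℤ) :
    BrL k (Aelt k m) (Gelt k n) = -(Aelt k (m + n) - Aelt k (m - n)) := by
  rw [Gelt_pos k h]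
  have := BrL_single_single k (Sum.inl m) (Sum.inr ⟨n, h⟩)
  simp only [brB] at this
  exact this

lemma brL_GA (n m : ℤ) : BrL k (Gelt k n) (Aelt k m) = Aelt k (m + n) - Aelt k (m - n) := by
  rcases lt_trichotomy 0 n with h | h | h
  · exact brL_GA_pos k h m
  · rw [← h, Gelt_zero]; simp
  · have h' : 0 < -n := by omega
    rw [show n = -(-n) by ring, Gelt_neg, map_neg, LinearMap.neg_apply, brL_GA_pos k h' m]
    rw [show m + -n = m - -(-n) by ring, show m - -n = m + -(-n) by ring]
    abel

lemma brL_AG (m n : ℤ) : BrL k (Aelt k m) (Gelt k n) = -(Aelt k (m + n) - Aelt k (m - n)) := by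
  rcases lt_trichotomy 0 n with h | h | h
  · exact brL_AG_pos k h m
  · rw [← h, Gelt_zero]; simp
  · have h' : 0 < -n := by omega
    rw [show n = -(-n) by ring, Gelt_neg, map_neg, brL_AG_pos k h' m]
    rw [show m + -n = m - -(-n) by ring, show m - -n = m + -(-n) by ring]
    abel

lemma brL_GG (n m : ℤ) : BrL k (Gelt k n) (Gelt k m) = 0 := by
  have key : ∀ a b : {l : ℤ // 0 < l}, BrL k (Finsupp.single (Sum.inr a) (1:k)) (Finsupp.single (Sum.inr b) (1:k)) = 0 := by
    intro a b
    simpa [brB] using BrL_single_single k (Sum.inr a) (Sum.inr b)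
  unfold Gelt
  split_ifs with h1 h2 h3 h4 h5 h6 <;>
    simp [key, map_neg, LinearMap.neg_apply]

lemma brB_skew (i j : OnsIdx) : brB k i j = - brB k j i := by
  cases i with
  | inl l =>
    cases j with
    | inl m =>
      simp only [brB]
      rw [show l - m = -(m - l) by ring, Gelt_neg]
      simp
    | inr a => simp [brB]
  | inr a =>
    cases j with
    | inl m => simp [brB]
    | inr b => simp [brB]

lemma BrL_skew (x y : OnsIdx →₀ k) : BrL k x y = - BrL k y x := by
  have h : BrL k + (BrL k).flip = 0 := by
    ext i j
    simp only [LinearMap.add_apply, LinearMap.flip_apply, LinearMap.zero_apply,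
      LinearMap.compr₂_apply, LinearMap.coe_comp, Function.comp_apply, Finsupp.lsingle_apply]
    rw [BrL_single_single, BrL_single_single, brB_skew]
    abel
  have h3 : BrL k x y + BrL k y x = 0 := by
    have := LinearMap.congr_fun (LinearMap.congr_fun h x) y
    simpa using this
  exact eq_neg_of_add_eq_zero_left h3

lemma hAAA (l m n : ℤ) : BrL k (Aelt k l) (BrL k (Aelt k m) (Aelt k n)) +
    BrL k (Aelt k m) (BrL k (Aelt k n) (Aelt k l)) +
    BrL k (Aelt k n) (BrL k (Aelt k l) (Aelt k m)) = 0 := by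
  simp only [brL_AA, map_smul, brL_AG]
  ring_nf
  module

lemma hAAG (l m n : ℤ) : BrL k (Aelt k l) (BrL k (Aelt k m) (Gelt k n)) +
    BrL k (Aelt k m) (BrL k (Gelt k n) (Aelt k l)) +
    BrL k (Gelt k n) (BrL k (Aelt k l) (Aelt k m)) = 0 := by
  rw [brL_AG, brL_GA, brL_AA, map_neg, map_sub, map_sub, map_smul, brL_GG, brL_AA, brL_AA,
    brL_AA, brL_AA]
  rw [show m - (l + n) = -(l - (m - n)) by ring, Gelt_neg,
    show m - (l - n) = -(l - (m + n)) by ring, Gelt_neg]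
  module

lemma hAGG (l m n : ℤ) : BrL k (Aelt k l) (BrL k (Gelt k m) (Gelt k n)) +
    BrL k (Gelt k m) (BrL k (Gelt k n) (Aelt k l)) +
    BrL k (Gelt k n) (BrL k (Aelt k l) (Gelt k m)) = 0 := by
  rw [brL_GG, map_zero, brL_GA, map_sub, brL_GA, brL_GA, brL_AG, map_neg, map_sub,
    brL_GA, brL_GA]
  ring_nf
  module

lemma hGGG (l m n : ℤ) : BrL k (Gelt k l) (BrL k (Gelt k m) (Gelt k n)) +
    BrL k (Gelt k m) (BrL k (Gelt k n) (Gelt k l)) +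
    BrL k (Gelt k n) (BrL k (Gelt k l) (Gelt k m)) = 0 := by
  simp [brL_GG]

lemma jac_rot (u v w : OnsIdx →₀ k)
    (h : BrL k u (BrL k v w) + BrL k v (BrL k w u) + BrL k w (BrL k u v) = 0) :
    BrL k w (BrL k u v) + BrL k u (BrL k v w) + BrL k v (BrL k w u) = 0 := by
  rw [← h]; abel

lemma jac_single (i j l : OnsIdx) :
    BrL k (Finsupp.single i 1) (BrL k (Finsupp.single j 1) (Finsupp.single l 1)) +
    BrL k (Finsupp.single j 1) (BrL k (Finsupp.single l 1) (Finsupp.single i 1)) +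
    BrL k (Finsupp.single l 1) (BrL k (Finsupp.single i 1) (Finsupp.single j 1)) = 0 := by
  have hA : ∀ m : ℤ, (Finsupp.single (Sum.inl m) 1 : OnsIdx →₀ k) = Aelt k m := fun m => rfl
  have hG : ∀ p : {l : ℤ // 0 < l}, (Finsupp.single (Sum.inr p) (1:k) : OnsIdx →₀ k)
      = Gelt k p.1 := fun p => (Gelt_pos k p.2).symm
  obtain (m | p) := i <;> obtain (m' | p') := j <;> obtain (m'' | p'') := l <;>
    simp only [hA, hG]
  · exact hAAA k m m' m''
  · exact hAAG k m m' p''.1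
  · rw [← hAAG k m'' m p'.1]; abel
  · exact hAGG k m p'.1 p''.1
  · rw [← hAAG k m' m'' p.1]; abel
  · rw [← hAGG k m' p''.1 p.1]; abel
  · rw [← hAGG k m'' p.1 p'.1]; abel
  · exact hGGG k p.1 p'.1 p''.1

lemma add3 {M : Type*} [AddCommGroup M] {a b c d e f : M}
    (h1 : a + c + e = 0) (h2 : b + d + f = 0) : a + b + (c + d) + (e + f) = 0 := by
  rw [show a + b + (c + d) + (e + f) = a + c + e + (b + d + f) by abel, h1, h2, add_zero]

lemma jacL (x y z : OnsIdx →₀ k) :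
    BrL k x (BrL k y z) + BrL k y (BrL k z x) + BrL k z (BrL k x y) = 0 := by
  induction x using Finsupp.induction_linear with
  | zero => simp
  | add f g hf hg =>
    simp only [map_add, LinearMap.add_apply]
    exact add3 hf hg
  | single a b =>
    induction y using Finsupp.induction_linear with
    | zero => simp
    | add f g hf hg =>
      simp only [map_add, LinearMap.add_apply]
      exact add3 hf hg
    | single a' b' =>
      induction z using Finsupp.induction_linear with
      | zero => simp
      | add f g hf hg =>
        simp only [map_add, LinearMap.add_apply]
        exact add3 hf hg
      | single a'' b'' =>
        have e : ∀ (c : k) (i : OnsIdx), (Finsupp.single i c : OnsIdx →₀ k)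
            = c • Finsupp.single i 1 := by
          intro c i; rw [Finsupp.smul_single, smul_eq_mul, mul_one]
        rw [e b a, e b' a', e b'' a'']
        simp only [map_smul, LinearMap.smul_apply, smul_smul]
        rw [show b'' * b' * b = b * b' * b'' by ring, show b * b'' * b' = b * b' * b'' by ring,
          show b' * b * b'' = b * b' * b'' by ring, ← smul_add, ← smul_add, jac_single,
          smul_zero]

theorem stmt_0 :
    (∀ x : OnsIdx →₀ k, onsBracket k x x = 0) ∧
    (∀ x y z : OnsIdx →₀ k,
      onsBracket k x (onsBracket k y z) + onsBracket k y (onsBracket k z x) +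
        onsBracket k z (onsBracket k x y) = 0) := by
  constructor
  · intro x
    rw [onsBracket_eq]
    have h := BrL_skew k x x
    have h2 : BrL k x x + BrL k x x = 0 := by nth_rewrite 2 [h]; exact add_neg_cancel _
    have h3 : (2 : k) • BrL k x x = 0 := by rw [two_smul]; exact h2
    rcases smul_eq_zero.mp h3 with h4 | h4
    · exact absurd h4 two_ne_zero
    · exact h4
  · intro x y z
    simp only [onsBracket_eq]
    exact jacL k x y z
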